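/- Let A ∈ ℝ^{n×(n+2)} have full row rank with ker A ∩ ℝ^{n+2}_> ≠ ∅. If ker A is not a direct product (there is no partition of the coordinates {1,…,n+2} into two nonempty blocks such that ker A equals the direct product of its coordinate projections onto the two blocks), then, after a suitable permutation of the columns of A, one has ker A = c ∘ im(1_{n+2}, q) = { c ∘ (s·1_{n+2} + t·q) : s,t ∈ ℝ }, where c ∈ ℝ^{n+2}_> and q ∈ ℝ^{n+2} satisfies 1 = q_1 ≥ q_2 ≥ … ≥ q_{n+2} = −1. -/
import Mathlib


/-- If `A ∈ ℝ^{n×(n+2)}` has full row rank, `ker A` contains a positive vector, and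
`ker A` is not a direct product with respect to any nontrivial partition of the
coordinates, then after a suitable permutation of the columns,
`ker A = c ∘ im(1, q)` with `c > 0` and `1 = q₁ ≥ … ≥ q_{n+2} = −1`. -/
theorem stmt_8 {n : ℕ} (A : Matrix (Fin n) (Fin (n + 2)) ℝ)
    (hrank : A.rank = n)
    (hpos : ∃ y : Fin (n + 2) → ℝ, A.mulVec y = 0 ∧ ∀ j, 0 < y j)
    (hnd : ¬∃ S : Finset (Fin (n + 2)), S.Nonempty ∧ Sᶜ.Nonempty ∧
      ∀ u w : Fin (n + 2) → ℝ, A.mulVec u = 0 → A.mulVec w = 0 →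
        A.mulVec (fun j => if j ∈ S then u j else w j) = 0) :
    ∃ (σ : Equiv.Perm (Fin (n + 2))) (c q : Fin (n + 2) → ℝ),
      (∀ j, 0 < c j) ∧ q 0 = 1 ∧ q (Fin.last (n + 1)) = -1 ∧
      (∀ i j : Fin (n + 2), i ≤ j → q j ≤ q i) ∧
      ∀ y : Fin (n + 2) → ℝ,
        (A.submatrix id σ).mulVec y = 0 ↔ ∃ s t : ℝ, y = fun j => c j * (s + t * q j) := by
  classical
  obtain ⟨y, hyk, hypos⟩ := hpos
  set f := A.mulVecLin with hf
  have hmem : ∀ w : Fin (n + 2) → ℝ, w ∈ LinearMap.ker f ↔ A.mulVec w = 0 := by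
    intro w; simp [f, LinearMap.mem_ker]
  have hyk' : y ∈ LinearMap.ker f := (hmem y).mpr hyk
  -- kernel has dimension 2
  have hker2 : Module.finrank ℝ (LinearMap.ker f) = 2 := by
    have h1 := LinearMap.finrank_range_add_finrank_ker f
    rw [Module.finrank_fintype_fun_eq_card, Fintype.card_fin] at h1
    have h2 : Module.finrank ℝ (LinearMap.range f) = n := hrank
    omega
  have hy0 : y ≠ 0 := by
    intro h
    have := hypos 0
    rw [h] at this
    exact lt_irrefl _ this
  -- find z in the kernel, not a multiple of y
  have hlt : Submodule.span ℝ {y} < LinearMap.ker f := by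
    refine lt_of_le_of_ne ?_ ?_
    · rw [Submodule.span_le, Set.singleton_subset_iff]; exact hyk'
    · intro h
      have := finrank_span_singleton (K := ℝ) hy0
      rw [h, hker2] at this
      omega
  obtain ⟨z, hzk, hznot⟩ := SetLike.exists_of_lt hlt
  -- the ratio function
  set r : Fin (n + 2) → ℝ := fun j => z j / y j with hr
  have hzr : ∀ j, z j = r j * y j := by
    intro j
    have := div_mul_cancel₀ (z j) (ne_of_gt (hypos j))
    simpa [hr] using this.symm
  -- linear independence of y, z
  have hli : LinearIndependent ℝ ![y, z] := by
    rw [LinearIndependent.pair_iff]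
    intro s t hst
    have ht : t = 0 := by
      by_contra ht
      apply hznot
      rw [Submodule.mem_span_singleton]
      refine ⟨-s / t, ?_⟩
      funext j
      have := congrFun hst j
      simp only [Pi.add_apply, Pi.smul_apply, smul_eq_mul, Pi.zero_apply] at this ⊢
      field_simp
      linarith
    subst ht
    refine ⟨?_, rfl⟩
    simp only [zero_smul, add_zero] at hst
    rcases smul_eq_zero.mp hst with h | h
    · exact h
    · exact absurd h hy0
  -- span {y,z} = ker f
  have hspan : Submodule.span ℝ (Set.range ![y, z]) = LinearMap.ker f := by
    apply Submodule.eq_of_le_of_finrank_le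
    · rw [Submodule.span_le]
      rintro x ⟨i, rfl⟩
      fin_cases i
      · exact hyk'
      · exact hzk
    · rw [hker2, finrank_span_eq_card hli, Fintype.card_fin]
  have hmemspan : ∀ w : Fin (n + 2) → ℝ,
      A.mulVec w = 0 ↔ ∃ a b : ℝ, a • y + b • z = w := by
    intro w
    rw [← hmem, ← hspan, Submodule.mem_span_range_iff_exists_fun]
    constructor
    · rintro ⟨co, hco⟩
      exact ⟨co 0, co 1, by simpa [Fin.sum_univ_two] using hco⟩
    · rintro ⟨a, b, hab⟩
      exact ⟨![a, b], by simpa [Fin.sum_univ_two] using hab⟩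
  -- sort the ratios
  set σ : Equiv.Perm (Fin (n + 2)) := Tuple.sort (fun j => -(r j)) with hσ
  have hant : ∀ i j : Fin (n + 2), i ≤ j → r (σ j) ≤ r (σ i) := by
    intro i j hij
    have := Tuple.monotone_sort (fun j => -(r j)) hij
    simpa using this
  set M : ℝ := r (σ 0) with hM
  set m : ℝ := r (σ (Fin.last (n + 1))) with hm
  have hmM : m ≤ M := hant 0 (Fin.last (n + 1)) (Fin.zero_le _)
  have hlt' : m < M := by
    rcases lt_or_eq_of_le hmM with h | h
    · exact h
    · exfalso
      apply hznot
      rw [Submodule.mem_span_singleton]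
      refine ⟨M, ?_⟩
      funext k
      have h1 : r k = M := by
        have e1 : r (σ (σ.symm k)) ≤ M := hant 0 (σ.symm k) (Fin.zero_le _)
        have e2 : m ≤ r (σ (σ.symm k)) := hant (σ.symm k) (Fin.last (n + 1)) (Fin.le_last _)
        rw [Equiv.apply_symm_apply] at e1 e2
        linarith
      simp only [Pi.smul_apply, smul_eq_mul]
      rw [hzr k, h1]
  have hMm : M - m ≠ 0 := by linarith
  refine ⟨σ, fun j => y (σ j), fun j => (2 * r (σ j) - (M + m)) / (M - m),
    fun j => hypos (σ j), ?_, ?_, ?_, ?_⟩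
  · show (2 * r (σ 0) - (M + m)) / (M - m) = 1
    rw [show 2 * r (σ 0) - (M + m) = M - m by rw [hM]; ring, div_self hMm]
  · show (2 * r (σ (Fin.last (n + 1))) - (M + m)) / (M - m) = -1
    rw [show 2 * r (σ (Fin.last (n + 1))) - (M + m) = -(M - m) by rw [hm]; ring,
      neg_div, div_self hMm]
  · intro i j hij
    show (2 * r (σ j) - (M + m)) / (M - m) ≤ (2 * r (σ i) - (M + m)) / (M - m)
    have := hant i j hij
    gcongr <;> linarith
  · intro w
    have hsub : (A.submatrix id ⇑σ).mulVec w = A.mulVec (w ∘ ⇑σ.symm) ∘ id :=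
      Matrix.submatrix_mulVec_equiv A w id σ
    rw [hsub]
    simp only [Function.comp_id]
    rw [hmemspan]
    constructor
    · rintro ⟨a, b, hab⟩
      refine ⟨a + b * (M + m) / 2, b * (M - m) / 2, ?_⟩
      funext j
      have h1 : w j = a * y (σ j) + b * z (σ j) := by
        have := congrFun hab (σ j)
        simp only [Pi.add_apply, Pi.smul_apply, smul_eq_mul, Function.comp_apply,
          Equiv.symm_apply_apply] at this
        linarith [this]
      rw [h1, hzr (σ j)]
      field_simp
      ring
    · rintro ⟨s, t, hst⟩
      refine ⟨s - t * (M + m) / (M - m), 2 * t / (M - m), ?_⟩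
      funext k
      have h1 : w (σ.symm k) = y k * (s + t * ((2 * r k - (M + m)) / (M - m))) := by
        rw [hst]
        simp only [Equiv.apply_symm_apply]
      simp only [Pi.add_apply, Pi.smul_apply, smul_eq_mul, Function.comp_apply, h1, hzr k]
      field_simp
      ring
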